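/- Let D_{λ−μ} be a connected shifted quasi-Ferrers diagram containing at least two lattice points. Then there exists a lattice point c in D_{λ−μ} such that D_{λ−μ} \ {c} is again a connected shifted quasi-Ferrers diagram (for a suitable modified pair λ', μ'). -/

import Mathlib

/-- The shifted quasi-Ferrers diagram `D_{λ−μ} = {(i,j) : 1 ≤ i ≤ h, μ_i < j ≤ λ_i}`. -/
def quasiFerrers (h : ℕ) (lam mu : ℕ → ℕ) : Set (ℕ × ℕ) :=
  {p | 1 ≤ p.1 ∧ p.1 ≤ h ∧ mu p.1 < p.2 ∧ p.2 ≤ lam p.1}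

/-- A quasi-Borel move of geometric length 1 between two points of `D`. -/
def UnitStep (D : Set (ℕ × ℕ)) (c c' : ℕ × ℕ) : Prop :=
  c ∈ D ∧ c' ∈ D ∧
    ((c.1 = c'.1 ∧ (c.2 + 1 = c'.2 ∨ c'.2 + 1 = c.2)) ∨
     (c.2 = c'.2 ∧ (c.1 + 1 = c'.1 ∨ c'.1 + 1 = c.1)))

/-- `D` is connected: every pair of its points is joined by a walk of quasi-Borel
moves of geometric length 1 staying inside `D`. -/
def DiagramConnected (D : Set (ℕ × ℕ)) : Prop :=
  ∀ c ∈ D, ∀ c' ∈ D, Relation.ReflTransGen (UnitStep D) c c'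

lemma unitStep_symm (D : Set (ℕ × ℕ)) : Symmetric (UnitStep D) := by
  rintro c c' ⟨h1, h2, h3⟩
  exact ⟨h2, h1, by tauto⟩

lemma mem_quasiFerrers {h : ℕ} {lam mu : ℕ → ℕ} {p : ℕ × ℕ} :
    p ∈ quasiFerrers h lam mu ↔ 1 ≤ p.1 ∧ p.1 ≤ h ∧ mu p.1 < p.2 ∧ p.2 ≤ lam p.1 :=
  Iff.rfl

/-- Horizontal path within a single row of a quasi-Ferrers diagram. -/
lemma row_path (h : ℕ) (lam mu : ℕ → ℕ) (i j d : ℕ)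
    (hj : (i, j) ∈ quasiFerrers h lam mu) (hj' : (i, j + d) ∈ quasiFerrers h lam mu) :
    Relation.ReflTransGen (UnitStep (quasiFerrers h lam mu)) (i, j) (i, j + d) := by
  induction d with
  | zero => exact .refl
  | succ d ih =>
    obtain ⟨a, b, c, e⟩ := hj
    obtain ⟨a', b', c', e'⟩ := hj'
    have hmem : (i, j + d) ∈ quasiFerrers h lam mu := by
      refine ⟨a, b, ?_, ?_⟩ <;> simp_all <;> omega
    exact (ih hmem).tail ⟨hmem, ⟨a', b', c', e'⟩, Or.inl ⟨rfl, Or.inl rfl⟩⟩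

lemma row_path' (h : ℕ) (lam mu : ℕ → ℕ) (i j j' : ℕ)
    (hj : (i, j) ∈ quasiFerrers h lam mu) (hj' : (i, j') ∈ quasiFerrers h lam mu) :
    Relation.ReflTransGen (UnitStep (quasiFerrers h lam mu)) (i, j) (i, j') := by
  rcases le_total j j' with hle | hle
  · obtain ⟨d, rfl⟩ : ∃ d, j' = j + d := ⟨j' - j, by omega⟩
    exact row_path h lam mu i j d hj hj'
  · obtain ⟨d, rfl⟩ : ∃ d, j = j' + d := ⟨j - j', by omega⟩
    exact (Std.Symm.symm (self := @Relation.ReflTransGen.stdSymm _ _ ⟨unitStep_symm _⟩) _ _)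
      (row_path h lam mu i j' d hj' hj)

/-- If consecutive rows overlap, the diagram is connected. -/
lemma connected_of_overlap (h : ℕ) (lam mu : ℕ → ℕ)
    (hov : ∀ i, 1 ≤ i → i + 1 ≤ h →
      ∃ j, mu i < j ∧ j ≤ lam i ∧ mu (i + 1) < j ∧ j ≤ lam (i + 1)) :
    DiagramConnected (quasiFerrers h lam mu) := by
  have key : ∀ d i j j', (i, j) ∈ quasiFerrers h lam mu →
      (i + d, j') ∈ quasiFerrers h lam mu →
      Relation.ReflTransGen (UnitStep (quasiFerrers h lam mu)) (i, j) (i + d, j') := by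
    intro d
    induction d with
    | zero => intro i j j' hj hj'; exact row_path' h lam mu i j j' hj hj'
    | succ d ih =>
      intro i j j' hj hj'
      obtain ⟨a, b, c, e⟩ := hj
      obtain ⟨a', b', c', e'⟩ := hj'
      obtain ⟨k, hk1, hk2, hk3, hk4⟩ := hov i (by simpa using a) (by simp at b'; omega)
      have hik : (i, k) ∈ quasiFerrers h lam mu := by
        refine ⟨a, b, by simpa using hk1, by simpa using hk2⟩
      have hik' : (i + 1, k) ∈ quasiFerrers h lam mu := by
        refine ⟨by simp, by simp at b' ⊢; omega, by simpa using hk3, by simpa using hk4⟩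
      have p1 := row_path' h lam mu i j k ⟨a, b, c, e⟩ hik
      have step : UnitStep (quasiFerrers h lam mu) (i, k) (i + 1, k) :=
        ⟨hik, hik', Or.inr ⟨rfl, Or.inl rfl⟩⟩
      have p2 := ih (i + 1) k j' hik' (by
        have : i + 1 + d = i + (d + 1) := by omega
        rw [this]; exact ⟨a', b', c', e'⟩)
      have : i + (d + 1) = i + 1 + d := by omega
      rw [this]
      exact (p1.tail step).trans p2
  intro c hc c' hc'
  rcases le_total c.1 c'.1 with hle | hle
  · obtain ⟨d, hd⟩ : ∃ d, c'.1 = c.1 + d := ⟨c'.1 - c.1, by omega⟩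
    have := key d c.1 c.2 c'.2 (by simpa using hc) (by rw [← hd]; simpa using hc')
    simpa [← hd] using this
  · obtain ⟨d, hd⟩ : ∃ d, c.1 = c'.1 + d := ⟨c.1 - c'.1, by omega⟩
    have := key d c'.1 c'.2 c.2 (by simpa using hc') (by rw [← hd]; simpa using hc)
    have := (Std.Symm.symm (self := @Relation.ReflTransGen.stdSymm _ _ ⟨unitStep_symm _⟩) _ _) this
    simpa [← hd] using this

/-- If the diagram is connected, consecutive rows overlap. -/
lemma overlap_of_connected (h : ℕ) (lam mu : ℕ → ℕ)
    (hpart : ∀ i, 1 ≤ i → i ≤ h → i - 1 ≤ mu i ∧ mu i < lam i)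
    (hconn : DiagramConnected (quasiFerrers h lam mu)) :
    ∀ i, 1 ≤ i → i + 1 ≤ h →
      ∃ j, mu i < j ∧ j ≤ lam i ∧ mu (i + 1) < j ∧ j ≤ lam (i + 1) := by
  intro i h1 h2
  have hi := hpart i h1 (by omega)
  have hi1 := hpart (i + 1) (by omega) h2
  have hc : (i, lam i) ∈ quasiFerrers h lam mu := ⟨h1, by omega, by simpa using hi.2, le_refl _⟩
  have hc' : (i + 1, lam (i + 1)) ∈ quasiFerrers h lam mu :=
    ⟨by omega, h2, by simpa using hi1.2, le_refl _⟩
  have hpath := hconn _ hc _ hc'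
  have crossing : ∀ a b : ℕ × ℕ,
      Relation.ReflTransGen (UnitStep (quasiFerrers h lam mu)) a b →
      a.1 ≤ i → i < b.1 →
      ∃ j, mu i < j ∧ j ≤ lam i ∧ mu (i + 1) < j ∧ j ≤ lam (i + 1) := by
    intro a b hab
    induction hab with
    | refl => intro h1 h2; omega
    | @tail b c hab hbc ih =>
      intro ha hcc
      by_cases hb : b.1 ≤ i
      · obtain ⟨hbD, hcD, hor⟩ := hbc
        rcases hor with ⟨heq, _⟩ | ⟨heq, hor⟩
        · omega
        · have hbi : b.1 = i := by omega
          have hci : c.1 = i + 1 := by omega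
          obtain ⟨_, _, hb3, hb4⟩ := hbD
          obtain ⟨_, _, hc3, hc4⟩ := hcD
          exact ⟨b.2, by rw [← hbi]; exact hb3, by rw [← hbi]; exact hb4,
            by rw [← hci]; omega, by rw [← hci]; omega⟩
      · exact ih ha (by omega)
  exact crossing _ _ hpath (by simp) (by simp)

/-- From a connected shifted quasi-Ferrers diagram with at least two lattice points,
one can remove a point `c` so that the rest is again a connected shifted
quasi-Ferrers diagram for a suitably modified pair `λ', μ'`. -/
theorem quasiFerrers_remove_point (h : ℕ) (lam mu : ℕ → ℕ)
    (hpart : ∀ i, 1 ≤ i → i ≤ h → i - 1 ≤ mu i ∧ mu i < lam i)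
    (hconn : DiagramConnected (quasiFerrers h lam mu))
    (htwo : ∃ c₁ c₂ : ℕ × ℕ, c₁ ∈ quasiFerrers h lam mu ∧
      c₂ ∈ quasiFerrers h lam mu ∧ c₁ ≠ c₂) :
    ∃ c ∈ quasiFerrers h lam mu, ∃ (h' : ℕ) (lam' mu' : ℕ → ℕ),
      (∀ i, 1 ≤ i → i ≤ h' → i - 1 ≤ mu' i ∧ mu' i < lam' i) ∧
      quasiFerrers h' lam' mu' = quasiFerrers h lam mu \ {c} ∧
      DiagramConnected (quasiFerrers h lam mu \ {c}) := by
  obtain ⟨c₁, c₂, hc₁, hc₂, hne⟩ := htwo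
  have hov := overlap_of_connected h lam mu hpart hconn
  -- h ≥ 1
  obtain ⟨a1, a2, a3, a4⟩ := hc₁
  obtain ⟨b1, b2, b3, b4⟩ := hc₂
  have hh1 : 1 ≤ h := le_trans a1 a2
  rcases Nat.lt_or_ge h 2 with hh | hh
  · -- h = 1 : both points in row 1, remove the rightmost cell of row 1
    have h1 : h = 1 := by omega
    subst h1
    have hr1 : c₁.1 = 1 := by omega
    have hr2 : c₂.1 = 1 := by omega
    have hlt : mu 1 + 1 < lam 1 := by
      by_contra hcon
      apply hne
      rw [hr1] at a3 a4; rw [hr2] at b3 b4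
      exact Prod.ext (hr1.trans hr2.symm) (by omega)
    refine ⟨(1, lam 1), ⟨le_refl _, le_refl _, by simpa using (hpart 1 le_rfl le_rfl).2,
      le_refl _⟩, 1, (fun i => if i = 1 then lam 1 - 1 else lam i), mu, ?_, ?_, ?_⟩
    · intro i hi1 hi2
      have : i = 1 := by omega
      subst this
      exact ⟨by simp <;> omega, by simp <;> omega⟩
    · ext ⟨x, y⟩
      simp only [mem_quasiFerrers, Set.mem_diff, Set.mem_singleton_iff, Prod.mk.injEq]
      by_cases hx : x = 1 <;> simp [hx] <;> omega
    · have : quasiFerrers 1 lam mu \ {(1, lam 1)} =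
          quasiFerrers 1 (fun i => if i = 1 then lam 1 - 1 else lam i) mu := by
        ext ⟨x, y⟩
        simp only [mem_quasiFerrers, Set.mem_diff, Set.mem_singleton_iff, Prod.mk.injEq]
        by_cases hx : x = 1 <;> simp [hx] <;> omega
      rw [this]
      exact connected_of_overlap _ _ _ (by intro i hi1 hi2; omega)
  · -- h ≥ 2
    obtain ⟨g, rfl⟩ : ∃ g, h = g + 1 + 1 := ⟨h - 2, by omega⟩
    have hlast := hpart (g + 1 + 1) (by omega) le_rfl
    have hprev := hpart (g + 1) (by omega) (by omega)
    obtain ⟨k, hk1, hk2, hk3, hk4⟩ := hov (g + 1) (by omega) le_rfl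
    rcases Nat.lt_or_ge (mu (g + 1 + 1) + 1) (lam (g + 1 + 1)) with hbig | hsmall
    · -- top row has at least two cells
      rcases Nat.lt_or_ge (lam (g + 1)) (lam (g + 1 + 1)) with hcase | hcase
      · -- λ_{h-1} < λ_h : remove (h, λ_h), decrease λ_h by one
        refine ⟨(g + 1 + 1, lam (g + 1 + 1)),
          ⟨by omega, le_rfl, by simpa using hlast.2, le_refl _⟩,
          g + 1 + 1, (fun i => if i = g + 1 + 1 then lam (g + 1 + 1) - 1 else lam i), mu,
          ?_, ?_, ?_⟩
        · intro i hi1 hi2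
          by_cases hx : i = g + 1 + 1
          · subst hx; exact ⟨by simp <;> omega, by simp <;> omega⟩
          · simp only [if_neg hx]; exact hpart i hi1 hi2
        · ext ⟨x, y⟩
          simp only [mem_quasiFerrers, Set.mem_diff, Set.mem_singleton_iff, Prod.mk.injEq]
          by_cases hx : x = g + 1 + 1 <;> simp [hx] <;> omega
        · have heq : quasiFerrers (g + 1 + 1) lam mu \ {(g + 1 + 1, lam (g + 1 + 1))} =
              quasiFerrers (g + 1 + 1)
                (fun i => if i = g + 1 + 1 then lam (g + 1 + 1) - 1 else lam i) mu := by
            ext ⟨x, y⟩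
            simp only [mem_quasiFerrers, Set.mem_diff, Set.mem_singleton_iff, Prod.mk.injEq]
            by_cases hx : x = g + 1 + 1 <;> simp [hx] <;> omega
          rw [heq]
          refine connected_of_overlap _ _ _ ?_
          intro i hi1 hi2
          by_cases hx : i = g + 1
          · subst hx
            exact ⟨k, hk1, by beta_reduce; split_ifs <;> omega, hk3, by beta_reduce; split_ifs <;> omega⟩
          · obtain ⟨j, hj1, hj2, hj3, hj4⟩ := hov i hi1 hi2
            exact ⟨j, hj1, by beta_reduce; split_ifs <;> omega, hj3, by beta_reduce; split_ifs <;> omega⟩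
      · -- λ_h ≤ λ_{h-1} : remove (h, μ_h + 1), increase μ_h by one
        refine ⟨(g + 1 + 1, mu (g + 1 + 1) + 1),
          ⟨by omega, le_rfl, by simp, by simpa using hbig.le⟩,
          g + 1 + 1, lam, (fun i => if i = g + 1 + 1 then mu (g + 1 + 1) + 1 else mu i),
          ?_, ?_, ?_⟩
        · intro i hi1 hi2
          by_cases hx : i = g + 1 + 1
          · subst hx; exact ⟨by simp <;> omega, by simp <;> omega⟩
          · simp only [if_neg hx]; exact hpart i hi1 hi2
        · ext ⟨x, y⟩
          simp only [mem_quasiFerrers, Set.mem_diff, Set.mem_singleton_iff, Prod.mk.injEq]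
          by_cases hx : x = g + 1 + 1 <;> simp [hx] <;> omega
        · have heq : quasiFerrers (g + 1 + 1) lam mu \ {(g + 1 + 1, mu (g + 1 + 1) + 1)} =
              quasiFerrers (g + 1 + 1) lam
                (fun i => if i = g + 1 + 1 then mu (g + 1 + 1) + 1 else mu i) := by
            ext ⟨x, y⟩
            simp only [mem_quasiFerrers, Set.mem_diff, Set.mem_singleton_iff, Prod.mk.injEq]
            by_cases hx : x = g + 1 + 1 <;> simp [hx] <;> omega
          rw [heq]
          refine connected_of_overlap _ _ _ ?_
          intro i hi1 hi2
          by_cases hx : i = g + 1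
          · subst hx
            exact ⟨lam (g + 1 + 1), by beta_reduce; split_ifs <;> omega, hcase,
              by beta_reduce; split_ifs <;> omega, le_rfl⟩
          · obtain ⟨j, hj1, hj2, hj3, hj4⟩ := hov i hi1 hi2
            exact ⟨j, by beta_reduce; split_ifs <;> omega, hj2, by beta_reduce; split_ifs <;> omega, hj4⟩
    · -- top row is a single cell : remove it and decrease h
      refine ⟨(g + 1 + 1, lam (g + 1 + 1)),
        ⟨by omega, le_rfl, by simpa using hlast.2, le_refl _⟩,
        g + 1, lam, mu, fun i hi1 hi2 => hpart i hi1 (by omega), ?_, ?_⟩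
      · ext ⟨x, y⟩
        simp only [mem_quasiFerrers, Set.mem_diff, Set.mem_singleton_iff, Prod.mk.injEq]
        by_cases hx : x = g + 1 + 1 <;> simp [hx] <;> omega
      · have heq : quasiFerrers (g + 1 + 1) lam mu \ {(g + 1 + 1, lam (g + 1 + 1))} =
            quasiFerrers (g + 1) lam mu := by
          ext ⟨x, y⟩
          simp only [mem_quasiFerrers, Set.mem_diff, Set.mem_singleton_iff, Prod.mk.injEq]
          by_cases hx : x = g + 1 + 1 <;> simp [hx] <;> omega
        rw [heq]
        exact connected_of_overlap _ _ _ (fun i hi1 hi2 => hov i hi1 (by omega))
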